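/- Suppose X is a topological space in which every Λ-set is open, and for every pair of real functions f lower semi-contra-continuous and g upper semi-contra-continuous with g ≤ f there exists a contra-continuous h with g ≤ h ≤ f. Then X is extremally disconnected. -/
import Mathlib


open Set

variable {X : Type*} [TopologicalSpace X]

/-- The kernel `A^Λ`: intersection of all open sets containing `A`. -/
def kernelSet (A : Set X) : Set X := ⋂₀ {O | IsOpen O ∧ A ⊆ O}

/-- The V-hull `A^V`: union of all closed sets contained in `A`. -/
def vHull (A : Set X) : Set X := ⋃₀ {F | IsClosed F ∧ F ⊆ A}

/-- An F_σ set: a countable union of closed sets. -/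
def IsFsigma (A : Set X) : Prop :=
  ∃ S : Set (Set X), S.Countable ∧ (∀ F ∈ S, IsClosed F) ∧ A = ⋃₀ S

theorem extremallyDisconnected_of_insertion
    (hΛ : ∀ A : Set X, A = kernelSet A → IsOpen A)
    (hins : ∀ f g : X → ℝ,
      (∀ t : ℝ, IsClosed (f ⁻¹' Set.Ioi t)) →
      (∀ t : ℝ, IsClosed (g ⁻¹' Set.Iio t)) →
      g ≤ f →
      ∃ h : X → ℝ, (∀ U : Set ℝ, IsOpen U → IsClosed (h ⁻¹' U)) ∧ g ≤ h ∧ h ≤ f) :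
    ExtremallyDisconnected X := by
  constructor
  intro U hU
  set F : Set X := closure U with hF
  have hFc : IsClosed F := isClosed_closure
  set f : X → ℝ := F.indicator 1 with hfdef
  set g : X → ℝ := U.indicator 1 with hgdef
  have hf : ∀ t : ℝ, IsClosed (f ⁻¹' Set.Ioi t) := by
    intro t
    rcases lt_or_ge t 0 with ht | ht
    · have : f ⁻¹' Set.Ioi t = univ := by
        ext x
        simp only [mem_preimage, mem_Ioi, mem_univ, iff_true]
        exact lt_of_lt_of_le ht (Set.indicator_nonneg (by intros; norm_num) x)
      rw [this]; exact isClosed_univ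
    rcases lt_or_ge t 1 with ht1 | ht1
    · have : f ⁻¹' Set.Ioi t = F := by
        ext x
        simp only [mem_preimage, mem_Ioi]
        constructor
        · intro hx
          by_contra hxF
          rw [hfdef, Set.indicator_of_notMem hxF] at hx
          exact absurd hx (not_lt.2 ht)
        · intro hx
          rw [hfdef, Set.indicator_of_mem hx]
          exact ht1
      rw [this]; exact hFc
    · have : f ⁻¹' Set.Ioi t = ∅ := by
        ext x
        simp only [mem_preimage, mem_Ioi, mem_empty_iff_false, iff_false, not_lt]
        refine le_trans ?_ ht1
        by_cases hx : x ∈ F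
        · rw [hfdef, Set.indicator_of_mem hx, Pi.one_apply]
        · rw [hfdef, Set.indicator_of_notMem hx]; norm_num
      rw [this]; exact isClosed_empty
  have hg : ∀ t : ℝ, IsClosed (g ⁻¹' Set.Iio t) := by
    intro t
    rcases le_or_gt t 0 with ht | ht
    · have : g ⁻¹' Set.Iio t = ∅ := by
        ext x
        simp only [mem_preimage, mem_Iio, mem_empty_iff_false, iff_false, not_lt]
        exact le_trans ht (Set.indicator_nonneg (by intros; norm_num) x)
      rw [this]; exact isClosed_empty
    rcases le_or_gt t 1 with ht1 | ht1
    · have : g ⁻¹' Set.Iio t = Uᶜ := by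
        ext x
        simp only [mem_preimage, mem_Iio, mem_compl_iff]
        constructor
        · intro hx hxU
          rw [hgdef, Set.indicator_of_mem hxU] at hx
          exact absurd (lt_of_lt_of_le hx ht1) (lt_irrefl _)
        · intro hx
          rw [hgdef, Set.indicator_of_notMem hx]
          exact ht
      rw [this]; exact hU.isClosed_compl
    · have : g ⁻¹' Set.Iio t = univ := by
        ext x
        simp only [mem_preimage, mem_Iio, mem_univ, iff_true]
        refine lt_of_le_of_lt ?_ ht1
        by_cases hx : x ∈ U
        · rw [hgdef, Set.indicator_of_mem hx, Pi.one_apply]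
        · rw [hgdef, Set.indicator_of_notMem hx]; norm_num
      rw [this]; exact isClosed_univ
  have hgf : g ≤ f := by
    intro x
    by_cases hx : x ∈ U
    · rw [hgdef, Set.indicator_of_mem hx, hfdef,
        Set.indicator_of_mem (subset_closure hx)]
    · rw [hgdef, Set.indicator_of_notMem hx]
      exact Set.indicator_nonneg (by intros; norm_num) x
  obtain ⟨h, hcc, hgh, hhf⟩ := hins f g hf hg hgf
  set C : Set X := h ⁻¹' Set.Ioi 0 with hCdef
  have hCclosed : IsClosed C := hcc _ isOpen_Ioi
  have hUC : U ⊆ C := by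
    intro x hx
    have h1 : (1 : ℝ) ≤ h x := by
      have := hgh x
      rwa [hgdef, Set.indicator_of_mem hx] at this
    exact lt_of_lt_of_le one_pos h1
  have hCF : C ⊆ F := by
    intro x hx
    by_contra hxF
    have := hhf x
    rw [hfdef, Set.indicator_of_notMem hxF] at this
    exact absurd (lt_of_lt_of_le hx this) (lt_irrefl _)
  have hFC : F = C := Subset.antisymm (closure_minimal hUC hCclosed) hCF
  have hCopen : IsOpen C := by
    have hCeq : C = ⋃ n : ℕ, (h ⁻¹' Set.Iio (1 / (n + 1)))ᶜ := by
      ext x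
      simp only [mem_iUnion, mem_compl_iff, mem_preimage, mem_Iio, not_lt, hCdef, mem_Ioi]
      constructor
      · intro hx
        obtain ⟨n, hn⟩ := exists_nat_one_div_lt hx
        exact ⟨n, le_of_lt hn⟩
      · rintro ⟨n, hn⟩
        refine lt_of_lt_of_le ?_ hn
        positivity
    rw [hCeq]
    exact isOpen_iUnion fun n => (hcc _ isOpen_Iio).isOpen_compl
  rw [hFC]
  exact hCopen
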